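/- The maximum construction cost of the friendship graph F_n is ν*(F_n) = 17n² + n for all n ≥ 1. -/

import Mathlib

namespace ConsCost

variable {V : Type*} [Fintype V]

/-- The number of elements (vertices plus edges) of a graph. -/
noncomputable def numElts (G : SimpleGraph V) : ℕ :=
  Fintype.card V + Nat.card G.edgeSet

/-- `x` is a construction sequence for `G`: a bijective listing of the vertices and
edges of `G` in which every edge appears after both of its endpoints. -/
def IsCSeq (G : SimpleGraph V) (x : Fin (numElts G) ≃ V ⊕ G.edgeSet) : Prop :=
  ∀ (e : G.edgeSet), ∀ v ∈ (e : Sym2 V), x.symm (Sum.inl v) < x.symm (Sum.inr e)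

/-- The cost `ν(e,x) = (x⁻¹e − x⁻¹u) + (x⁻¹e − x⁻¹w)` of an edge `e = uw`
in the construction sequence `x`. -/
noncomputable def edgeCost (G : SimpleGraph V) (x : Fin (numElts G) ≃ V ⊕ G.edgeSet)
    (e : G.edgeSet) : ℕ :=
  2 * (x.symm (Sum.inr e) : ℕ) -
    Sym2.lift ⟨fun u w => ((x.symm (Sum.inl u) : ℕ) + (x.symm (Sum.inl w) : ℕ)),
      fun u w => by dsimp only; omega⟩ (e : Sym2 V)

/-- The cost `ν(x)` of a construction sequence: the sum of the costs of all edges. -/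
noncomputable def cost (G : SimpleGraph V) (x : Fin (numElts G) ≃ V ⊕ G.edgeSet) : ℕ :=
  ∑ᶠ e : G.edgeSet, edgeCost G x e

/-- The maximum construction cost `ν*(G)`. -/
noncomputable def maxCost (G : SimpleGraph V) : ℕ :=
  sSup {c | ∃ x, IsCSeq G x ∧ cost G x = c}

/-- The minimum construction cost `ν_*(G)`. -/
noncomputable def minCost (G : SimpleGraph V) : ℕ :=
  sInf {c | ∃ x, IsCSeq G x ∧ cost G x = c}
/-- The friendship graph `F_n`: `n` triangles sharing a single common vertex
(the hub `Sum.inl ()`); the `i`-th triangle has outer vertices `(i, 0)` and `(i, 1)`. -/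
def friendshipGraph (n : ℕ) : SimpleGraph (Unit ⊕ Fin n × Fin 2) :=
  SimpleGraph.fromRel (fun a b =>
    a = Sum.inl () ∨ ∃ (i : Fin n) (s t : Fin 2), a = Sum.inr (i, s) ∧ b = Sum.inr (i, t))

/-! ### Auxiliary machinery for the friendship graph -/

abbrev FV (n : ℕ) := Unit ⊕ Fin n × Fin 2

def hubv {n : ℕ} : FV n := Sum.inl ()
def ov {n : ℕ} (i : Fin n) (s : Fin 2) : FV n := Sum.inr (i, s)

def edg {n : ℕ} (i : Fin n) (k : Fin 3) : Sym2 (FV n) :=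
  if k.val = 2 then s(ov i 0, ov i 1) else s(hubv, ov i ⟨k.val % 2, Nat.mod_lt _ (by omega)⟩)

lemma edg0 {n : ℕ} (i : Fin n) : edg i 0 = s(hubv, ov i 0) := by simp [edg]
lemma edg1 {n : ℕ} (i : Fin n) : edg i 1 = s(hubv, ov i 1) := by simp [edg]
lemma edg2 {n : ℕ} (i : Fin n) : edg i 2 = s(ov i 0, ov i 1) := by simp [edg]

lemma adj_hub {n : ℕ} (i : Fin n) (s : Fin 2) : (friendshipGraph n).Adj hubv (ov i s) := by
  simp [friendshipGraph, SimpleGraph.fromRel_adj, hubv, ov]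

lemma adj_tri {n : ℕ} (i : Fin n) : (friendshipGraph n).Adj (ov i 0) (ov i 1) := by
  refine ⟨by simp [ov], Or.inl (Or.inr ⟨i, 0, 1, rfl, rfl⟩)⟩

lemma edg_mem {n : ℕ} (i : Fin n) (k : Fin 3) : edg i k ∈ (friendshipGraph n).edgeSet := by
  unfold edg
  split
  · exact (friendshipGraph n).mem_edgeSet.mpr (adj_tri i)
  · exact (friendshipGraph n).mem_edgeSet.mpr (adj_hub i _)

lemma edg_inj {n : ℕ} : Function.Injective (fun p : Fin n × Fin 3 => edg p.1 p.2) := by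
  rintro ⟨i, k⟩ ⟨j, l⟩ h
  simp only [edg] at h
  have hk := k.isLt; have hl := l.isLt
  split at h <;> split at h <;>
    simp_all [Sym2.eq_iff, ov, hubv, Prod.ext_iff, Fin.ext_iff] <;> omega

lemma edg_surj {n : ℕ} (e : Sym2 (FV n)) (he : e ∈ (friendshipGraph n).edgeSet) :
    ∃ p : Fin n × Fin 3, edg p.1 p.2 = e := by
  induction e using Sym2.ind with
  | _ a b =>
    rw [SimpleGraph.mem_edgeSet] at he
    obtain ⟨hne, hr⟩ := he
    rcases a with _ | ⟨i, s⟩ <;> rcases b with _ | ⟨j, t⟩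
    · simp at hne
    · refine ⟨(j, t.castLE (by norm_num)), ?_⟩
      fin_cases t <;> simp [edg, ov, hubv]
    · refine ⟨(i, s.castLE (by norm_num)), ?_⟩
      fin_cases s <;> simp [edg, ov, hubv, Sym2.eq_iff]
    · have hij : i = j ∧ s ≠ t := by
        rcases hr with (h | ⟨a, b, c, h1, h2⟩) | (h | ⟨a, b, c, h1, h2⟩)
        · simp at h
        · simp_all [Prod.ext_iff] <;> aesop
        · simp at h
        · simp_all [Prod.ext_iff] <;> aesop
      obtain ⟨rfl, hst⟩ := hij
      refine ⟨(i, 2), ?_⟩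
      fin_cases s <;> fin_cases t <;> simp_all [edg, ov, Sym2.eq_iff]

noncomputable def Eedges (n : ℕ) : Fin n × Fin 3 ≃ (friendshipGraph n).edgeSet :=
  Equiv.ofBijective (fun p => ⟨edg p.1 p.2, edg_mem p.1 p.2⟩)
    ⟨fun p q h => edg_inj (by simpa using congrArg Subtype.val h),
     fun e => by obtain ⟨p, hp⟩ := edg_surj e.1 e.2; exact ⟨p, Subtype.ext hp⟩⟩

lemma eedges_coe {n : ℕ} (p : Fin n × Fin 3) :
    ((Eedges n p : (friendshipGraph n).edgeSet) : Sym2 (FV n)) = edg p.1 p.2 := rfl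

lemma card_edgeSet (n : ℕ) : Nat.card (friendshipGraph n).edgeSet = 3 * n := by
  rw [← Nat.card_congr (Eedges n)]; simp [Nat.card_eq_fintype_card]; ring

lemma numElts_fg (n : ℕ) : numElts (friendshipGraph n) = 5 * n + 1 := by
  rw [numElts, card_edgeSet]; simp [Fintype.card_sum]; ring

/-- vertex positions -/
def posV {n : ℕ} : FV n → ℕ
  | Sum.inl _ => 0
  | Sum.inr (i, s) => 1 + 2 * i.val + s.val

def posE {n : ℕ} (p : Fin n × Fin 3) : ℕ :=
  if p.2.val = 2 then 4 * n + 1 + p.1.val else 2 * n + 1 + 2 * p.1.val + p.2.val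

noncomputable def posZ {n : ℕ} : FV n ⊕ (friendshipGraph n).edgeSet → ℕ
  | Sum.inl v => posV v
  | Sum.inr e => posE ((Eedges n).symm e)

lemma posV_lt {n : ℕ} (v : FV n) : posV v ≤ 2 * n := by
  rcases v with _ | ⟨i, s⟩ <;> simp [posV]
  have := i.isLt; have := s.isLt; omega

lemma posE_mem {n : ℕ} (p : Fin n × Fin 3) : 2 * n + 1 ≤ posE p ∧ posE p ≤ 5 * n := by
  have := p.1.isLt; have := p.2.isLt
  unfold posE; split <;> omega

lemma posE_inj {n : ℕ} : Function.Injective (posE (n := n)) := by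
  rintro ⟨i, k⟩ ⟨j, l⟩ h
  have := i.isLt; have := j.isLt; have hk := k.isLt; have hl := l.isLt
  simp only [posE] at h
  have : i.val = j.val ∧ k.val = l.val := by split at h <;> split at h <;> omega
  simp [Prod.ext_iff, Fin.ext_iff, this.1, this.2]

lemma posZ_inj {n : ℕ} : Function.Injective (posZ (n := n)) := by
  rintro (v | e) (w | f) h
  · rcases v with _ | ⟨i, s⟩ <;> rcases w with _ | ⟨j, t⟩ <;>
      simp only [posZ, posV] at h
    · rfl
    · omega
    · omega
    · have hs := s.isLt; have ht := t.isLt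
      have : i.val = j.val ∧ s.val = t.val := by omega
      simp [ov, Prod.ext_iff, Fin.ext_iff, this.1, this.2]
  · exact absurd h (by have := posE_mem ((Eedges n).symm f); have := posV_lt v; simp [posZ]; omega)
  · exact absurd h (by have := posE_mem ((Eedges n).symm e); have := posV_lt w; simp [posZ]; omega)
  · exact congrArg _ ((Eedges n).symm.injective (posE_inj h))

lemma posZ_le {n : ℕ} (z : FV n ⊕ (friendshipGraph n).edgeSet) : posZ z ≤ 5 * n := by
  rcases z with v | e
  · have := posV_lt v; simp [posZ]; omega
  · have := posE_mem ((Eedges n).symm e); simp [posZ]; omega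

/-- the optimal construction sequence, as a map to positions -/
noncomputable def Fmap (n : ℕ) (z : FV n ⊕ (friendshipGraph n).edgeSet) :
    Fin (numElts (friendshipGraph n)) :=
  ⟨posZ z, by rw [numElts_fg]; exact Nat.lt_succ_of_le (posZ_le z)⟩

lemma Fmap_bij (n : ℕ) : Function.Bijective (Fmap n) := by
  classical
  haveI : Fintype ↥(friendshipGraph n).edgeSet := Fintype.ofFinite _
  rw [Fintype.bijective_iff_injective_and_card]
  constructor
  · exact fun a b h => posZ_inj (by simpa [Fmap, Fin.ext_iff] using h)
  · rw [Fintype.card_sum, Fintype.card_fin, numElts_fg, ← Nat.card_eq_fintype_card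
      (α := ↥(friendshipGraph n).edgeSet), card_edgeSet]
    simp [Fintype.card_sum]; ring

noncomputable def xopt (n : ℕ) :
    Fin (numElts (friendshipGraph n)) ≃ FV n ⊕ (friendshipGraph n).edgeSet :=
  (Equiv.ofBijective (Fmap n) (Fmap_bij n)).symm

lemma xopt_symm (n : ℕ) (z : FV n ⊕ (friendshipGraph n).edgeSet) :
    (xopt n).symm z = Fmap n z := by
  rw [xopt, Equiv.symm_symm]; rfl

lemma xopt_symm_inr (n : ℕ) (p : Fin n × Fin 3) :
    (((xopt n).symm (Sum.inr (Eedges n p)) : Fin _) : ℕ) = posE p := by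
  rw [xopt_symm]; simp [Fmap, posZ]

lemma xopt_symm_inl (n : ℕ) (v : FV n) :
    (((xopt n).symm (Sum.inl v) : Fin _) : ℕ) = posV v := by
  rw [xopt_symm]; rfl

lemma cost_eq_sum (n : ℕ) (x : Fin (numElts (friendshipGraph n)) ≃
    FV n ⊕ (friendshipGraph n).edgeSet) :
    cost (friendshipGraph n) x = ∑ p : Fin n × Fin 3, edgeCost (friendshipGraph n) x (Eedges n p) := by
  classical
  haveI : Fintype ↥(friendshipGraph n).edgeSet := Fintype.ofFinite _
  rw [cost, finsum_eq_sum_of_fintype, ← Equiv.sum_comp (Eedges n)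
    (edgeCost (friendshipGraph n) x)]

lemma xopt_isCSeq (n : ℕ) : IsCSeq (friendshipGraph n) (xopt n) := by
  intro e v hv
  obtain ⟨p, rfl⟩ := (Eedges n).surjective e
  rw [Fin.lt_def, xopt_symm_inr, xopt_symm_inl]
  exact lt_of_le_of_lt (posV_lt v) (by have := (posE_mem p).1; omega)

lemma xopt_cost (n : ℕ) : cost (friendshipGraph n) (xopt n) = 17 * n ^ 2 + n := by
  rw [cost_eq_sum, Fintype.sum_prod_type]
  have hterm : ∀ i : Fin n,
      (∑ k : Fin 3, edgeCost (friendshipGraph n) (xopt n) (Eedges n (i, k)))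
        = 16 * n + 2 + 2 * i.val := by
    intro i
    have hi := i.isLt
    rw [Fin.sum_univ_three]
    simp only [edgeCost, eedges_coe, edg0, edg1, edg2, Sym2.lift_mk, xopt_symm_inr, xopt_symm_inl]
    simp only [posE, posV, hubv, ov]
    norm_num
    omega
  rw [Finset.sum_congr rfl (fun i _ => hterm i),
    Fin.sum_univ_eq_sum_range (fun m => 16 * n + 2 + 2 * m) n,
    Finset.sum_add_distrib, Finset.sum_const, Finset.card_range, ← Finset.mul_sum,
    smul_eq_mul]
  have h2 := Finset.sum_range_id_mul_two n
  have hs : 2 * (∑ i ∈ Finset.range n, i) = n * (n - 1) := by omega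
  rw [hs]
  cases n with
  | zero => simp
  | succ m => simp only [Nat.succ_sub_one]; ring

/-- sum of distinct naturals over a finset dominates the triangular number -/
lemma sum_range_card_le (s : Finset ℕ) : ∑ i ∈ Finset.range s.card, i ≤ ∑ x ∈ s, x := by
  classical
  induction s using Finset.strongInduction with
  | _ s ih =>
    rcases s.eq_empty_or_nonempty with rfl | hs
    · simp
    · have hMs : s.max' hs ∈ s := s.max'_mem hs
      have hcard : s.card ≤ s.max' hs + 1 := by
        have hsub : s ⊆ Finset.range (s.max' hs + 1) := fun x hx =>
          Finset.mem_range.mpr (Nat.lt_succ_of_le (s.le_max' x hx))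
        simpa using Finset.card_le_card hsub
      have hpos : 1 ≤ s.card := Finset.card_pos.mpr hs
      have h2 := ih (s.erase (s.max' hs)) (Finset.erase_ssubset hMs)
      rw [Finset.card_erase_of_mem hMs] at h2
      rw [← Finset.add_sum_erase _ _ hMs,
        show s.card = (s.card - 1) + 1 by omega, Finset.sum_range_succ]
      omega

lemma card_mul_le_two_mul_sum {α : Type*} [Fintype α] [DecidableEq α] (f : α → ℕ)
    (hf : Function.Injective f) :
    Fintype.card α * (Fintype.card α - 1) ≤ 2 * ∑ x, f x := by
  have h1 : ∑ y ∈ Finset.univ.image f, y = ∑ x, f x :=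
    Finset.sum_image (fun a _ b _ h => hf h)
  have h2 : (Finset.univ.image f).card = Fintype.card α := by
    rw [Finset.card_image_of_injective _ hf, Finset.card_univ]
  have h3 := sum_range_card_le (Finset.univ.image f)
  rw [h2, h1] at h3
  have h4 := Finset.sum_range_id_mul_two (Fintype.card α)
  omega

lemma cost_le (n : ℕ) (hn : 1 ≤ n) (x : Fin (numElts (friendshipGraph n)) ≃
    FV n ⊕ (friendshipGraph n).edgeSet) (hx : IsCSeq (friendshipGraph n) x) :
    cost (friendshipGraph n) x ≤ 17 * n ^ 2 + n := by
  classical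
  haveI : Fintype ↥(friendshipGraph n).edgeSet := Fintype.ofFinite _
  set P : FV n ⊕ (friendshipGraph n).edgeSet → ℕ := fun z => ((x.symm z : Fin _) : ℕ) with hP
  have key : ∀ (p : Fin n × Fin 3) (v : FV n), v ∈ edg p.1 p.2 →
      P (Sum.inl v) < P (Sum.inr (Eedges n p)) := by
    intro p v hv
    exact hx (Eedges n p) v (by rwa [eedges_coe])
  -- edge costs per triangle
  set a : ℕ := P (Sum.inl hubv) with ha
  set b : ℕ := ∑ pr : Fin n × Fin 2, P (Sum.inl (Sum.inr pr)) with hb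
  set T : ℕ := ∑ p : Fin n × Fin 3, P (Sum.inr (Eedges n p)) with hT
  have e1 : cost (friendshipGraph n) x + (2 * n * a + 2 * b) = 2 * T := by
    have per : ∀ i : Fin n,
        (∑ k : Fin 3, edgeCost (friendshipGraph n) x (Eedges n (i, k)))
          + (2 * a + 2 * (P (Sum.inl (ov i 0)) + P (Sum.inl (ov i 1))))
        = 2 * (∑ k : Fin 3, P (Sum.inr (Eedges n (i, k)))) := by
      intro i
      have k00 := key (i, 0) hubv (by rw [edg0]; exact Sym2.mem_mk_left _ _)
      have k01 := key (i, 0) (ov i 0) (by rw [edg0]; exact Sym2.mem_mk_right _ _)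
      have k10 := key (i, 1) hubv (by rw [edg1]; exact Sym2.mem_mk_left _ _)
      have k11 := key (i, 1) (ov i 1) (by rw [edg1]; exact Sym2.mem_mk_right _ _)
      have k20 := key (i, 2) (ov i 0) (by rw [edg2]; exact Sym2.mem_mk_left _ _)
      have k21 := key (i, 2) (ov i 1) (by rw [edg2]; exact Sym2.mem_mk_right _ _)
      rw [Fin.sum_univ_three, Fin.sum_univ_three]
      simp only [edgeCost, eedges_coe, edg0, edg1, edg2, Sym2.lift_mk]
      simp only [ha, hP] at k00 k01 k10 k11 k20 k21 ⊢
      omega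
    have hcost : cost (friendshipGraph n) x
        = ∑ i : Fin n, ∑ k : Fin 3, edgeCost (friendshipGraph n) x (Eedges n (i, k)) := by
      rw [cost_eq_sum, Fintype.sum_prod_type]
    have hbeq : b = ∑ i : Fin n, (P (Sum.inl (ov i 0)) + P (Sum.inl (ov i 1))) := by
      rw [hb, Fintype.sum_prod_type]
      exact Finset.sum_congr rfl (fun i _ => by rw [Fin.sum_univ_two]; rfl)
    have hTeq : T = ∑ i : Fin n, ∑ k : Fin 3, P (Sum.inr (Eedges n (i, k))) := by
      rw [hT, Fintype.sum_prod_type]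
    have h2na : 2 * n * a = ∑ _i : Fin n, 2 * a := by
      rw [Finset.sum_const, Finset.card_univ, Fintype.card_fin, smul_eq_mul]; ring
    rw [hcost, hbeq, hTeq, h2na, Finset.mul_sum, Finset.mul_sum, ← Finset.sum_add_distrib,
      ← Finset.sum_add_distrib]
    exact Finset.sum_congr rfl (fun i _ => per i)
  have e2 : (a + b) + T = ∑ z, P z := by
    rw [Fintype.sum_sum_type]
    have hv : ∑ v : FV n, P (Sum.inl v) = a + b := by
      rw [Fintype.sum_sum_type]
      simp [ha, hb, hubv]
    have he : ∑ e : ↥(friendshipGraph n).edgeSet, P (Sum.inr e) = T := by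
      rw [hT, ← Equiv.sum_comp (Eedges n) (fun e => P (Sum.inr e))]
    rw [hv, he]
  have e3 : 2 * (∑ z, P z) = 25 * n ^ 2 + 5 * n := by
    have hzz : ∑ z, P z = ∑ j : Fin (numElts (friendshipGraph n)), (j : ℕ) :=
      Equiv.sum_comp x.symm (fun j => (j : ℕ))
    rw [hzz, Fin.sum_univ_eq_sum_range (fun j => j) _, numElts_fg]
    have hsr := Finset.sum_range_id_mul_two (5 * n + 1)
    simp only [Nat.add_sub_cancel] at hsr
    have hexp : (5 * n + 1) * (5 * n) = 25 * n ^ 2 + 5 * n := by ring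
    rw [hexp] at hsr
    omega
  have e4 : (2 * n + 1) * (2 * n) ≤ 2 * (a + b) := by
    have hinj : Function.Injective (fun v : FV n => P (Sum.inl v)) :=
      fun v w h => Sum.inl_injective (x.symm.injective (Fin.val_injective h))
    have := card_mul_le_two_mul_sum _ hinj
    have hcv : Fintype.card (FV n) = 2 * n + 1 := by simp [Fintype.card_sum]; ring
    rw [hcv] at this
    have hv : ∑ v : FV n, P (Sum.inl v) = a + b := by
      rw [Fintype.sum_sum_type]; simp [ha, hb, hubv]
    rw [hv] at this
    simpa using this
  nlinarith [e1, e2, e3, e4, Nat.mul_le_mul_right a hn]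

/-- `ν*(F_n) = 17n² + n` for `n ≥ 1`. -/
theorem maxCost_friendship (n : ℕ) (hn : 1 ≤ n) :
    maxCost (friendshipGraph n) = 17 * n ^ 2 + n := by
  have hmem : (17 * n ^ 2 + n) ∈ {c | ∃ x, IsCSeq (friendshipGraph n) x ∧
      cost (friendshipGraph n) x = c} := ⟨xopt n, xopt_isCSeq n, xopt_cost n⟩
  have hub : ∀ c ∈ {c | ∃ x, IsCSeq (friendshipGraph n) x ∧ cost (friendshipGraph n) x = c},
      c ≤ 17 * n ^ 2 + n := by
    rintro c ⟨x, hx, rfl⟩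
    exact cost_le n hn x hx
  exact IsGreatest.csSup_eq ⟨hmem, hub⟩

end ConsCost
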